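/- For every automatic description mode R and every ε > 0 there exists an automatic description mode R' such that K_{R'}(xy) ≤ (1+ε)·K_R(x) + K_R(y) for all binary strings x and y. -/

import Mathlib

/-- A finite automaton: a finite directed graph whose edges are labeled by pairs
of an optional input letter and an optional output letter (`none` = ε). -/
structure Automaton (A B : Type*) where
  n : ℕ
  edges : List (Fin n × (Option A × Option B) × Fin n)

namespace Automaton

/-- `Reads G s t u v` : along some directed path from `s` to `t` one reads the
pair of strings `(u, v)` (concatenating labels, ε contributing nothing). -/
inductive Reads {A B : Type*} (G : Automaton A B) :
    Fin G.n → Fin G.n → List A → List B → Prop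
  | nil (s : Fin G.n) : Reads G s s [] []
  | step {s t r : Fin G.n} {a : Option A} {b : Option B} {u : List A} {v : List B} :
      (s, (a, b), t) ∈ G.edges → Reads G t r u v →
      Reads G s r (a.toList ++ u) (b.toList ++ v)

/-- The relation realized by the automaton: pairs readable along some directed
path, with arbitrary start and end states. -/
def Rel {A B : Type*} (G : Automaton A B) (u : List A) (v : List B) : Prop :=
  ∃ s t : Fin G.n, G.Reads s t u v

end Automaton

/-- A relation is automatic if it is realized by some automaton. -/
def IsAutomatic {A B : Type*} (R : List A → List B → Prop) : Prop :=
  ∃ G : Automaton A B, ∀ u v, R u v ↔ G.Rel u v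

/-- `R` is O(1)-valued: some constant bounds the number of strings related to any `p`. -/
def BoundedValued {A B : Type*} (R : List A → List B → Prop) : Prop :=
  ∃ c : ℕ, ∀ p, {x | R p x}.Finite ∧ {x | R p x}.ncard ≤ c

/-- An automatic description mode: an O(1)-valued automatic relation on binary strings. -/
def IsDescriptionMode (R : List Bool → List Bool → Prop) : Prop :=
  IsAutomatic R ∧ BoundedValued R

/-- Automatic Kolmogorov complexity: minimal length of a description of `x`
(`⊤` if there is none). -/
noncomputable def autK (R : List Bool → List Bool → Prop) (x : List Bool) : ℕ∞ :=
  sInf {n : ℕ∞ | ∃ p : List Bool, R p x ∧ n = p.length}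

open scoped ENNReal

namespace AutoKC

open Automaton

variable {A B : Type*}

lemma reads_trans {G : Automaton A B} {s t r : Fin G.n} {u v u' v'}
    (h1 : G.Reads s t u v) : G.Reads t r u' v' → G.Reads s r (u ++ u') (v ++ v') := by
  induction h1 with
  | nil s => intro h2; simpa using h2
  | step he h ih =>
    intro h2
    simpa [List.append_assoc] using Automaton.Reads.step he (ih h2)

lemma reads_single {G : Automaton A B} {s t : Fin G.n} {a : Option A} {b : Option B}
    (h : (s, (a, b), t) ∈ G.edges) : G.Reads s t a.toList b.toList := by
  simpa using Automaton.Reads.step h (Automaton.Reads.nil t)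

lemma reads_congr {G : Automaton A B} {s s' t t' : Fin G.n} {u v}
    (h : G.Reads s t u v) (h1 : s = s') (h2 : t = t') : G.Reads s' t' u v := h1 ▸ h2 ▸ h

lemma reads_split {G : Automaton A B} {s t : Fin G.n} {w v} (h : G.Reads s t w v) :
    ∀ u₁ u₂, w = u₁ ++ u₂ →
    ∃ m v₁ v₂, v = v₁ ++ v₂ ∧ G.Reads s m u₁ v₁ ∧ G.Reads m t u₂ v₂ := by
  induction h with
  | nil s =>
    intro u₁ u₂ he
    obtain ⟨h1, h2⟩ := List.append_eq_nil_iff.mp he.symm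
    subst h1; subst h2
    exact ⟨s, [], [], rfl, Automaton.Reads.nil s, Automaton.Reads.nil s⟩
  | @step s t r a b u v he hr ih =>
    intro u₁ u₂ heq
    cases a with
    | none =>
      simp only [Option.toList, List.nil_append] at heq
      obtain ⟨m, v₁, v₂, hv, h1, h2⟩ := ih u₁ u₂ heq
      refine ⟨m, b.toList ++ v₁, v₂, by simp [hv], ?_, h2⟩
      simpa using Automaton.Reads.step he h1
    | some bit =>
      simp only [Option.toList] at heq
      cases u₁ with
      | nil =>
        simp only [List.nil_append] at heq
        refine ⟨s, [], b.toList ++ v, by simp, Automaton.Reads.nil s, ?_⟩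
        rw [← heq]
        simpa using Automaton.Reads.step he hr
      | cons c u₁' =>
        simp only [List.cons_append, List.cons.injEq] at heq
        obtain ⟨hc, hu⟩ := heq
        subst hc
        obtain ⟨m, v₁, v₂, hv, h1, h2⟩ := ih u₁' u₂ hu
        refine ⟨m, b.toList ++ v₁, v₂, by simp [hv], ?_, h2⟩
        simpa using Automaton.Reads.step he h1

lemma ncard_image2_le {α β γ : Type*} {s : Set α} {t : Set β} (f : α → β → γ)
    (hs : s.Finite) (ht : t.Finite) :
    (Set.image2 f s t).ncard ≤ s.ncard * t.ncard := by
  rw [← Set.image_prod]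
  refine le_trans (Set.ncard_image_le (hs.prod ht)) ?_
  rw [← Nat.card_coe_set_eq, ← Nat.card_coe_set_eq, ← Nat.card_coe_set_eq,
    Nat.card_congr (Equiv.Set.prod s t), Nat.card_prod]


section Construction

variable (G : Automaton Bool Bool) (N : ℕ)

/-- Structured state space: block mode (with counter), tail mode (with counter), sim mode. -/
abbrev Q (n N : ℕ) := (Fin n × Fin (N + 1)) ⊕ ((Fin n × Fin (N + 1)) ⊕ Fin n)

abbrev Blk {n N : ℕ} (s : Fin n) (i : Fin (N + 1)) : Q n N := Sum.inl (s, i)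
abbrev Tl {n N : ℕ} (s : Fin n) (j : Fin (N + 1)) : Q n N := Sum.inr (Sum.inl (s, j))
abbrev Sm {n N : ℕ} (s : Fin n) : Q n N := Sum.inr (Sum.inr s)

/-- Structured edge list of the new automaton. -/
def E' : List (Q G.n N × (Option Bool × Option Bool) × Q G.n N) :=
  (G.edges.flatMap fun ed =>
    match ed with
    | (s, (none, b), t) =>
        ((List.finRange (N + 1)).flatMap fun i =>
          [(Blk s i, (none, b), Blk t i), (Tl s i, (none, b), Tl t i)])
        ++ [(Sm s, (none, b), Sm t)]
    | (s, (some a, b), t) =>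
        ((List.finRange N).flatMap fun i =>
          [(Blk s i.castSucc, (some a, b), Blk t i.succ),
           (Tl s i.castSucc, (some a, b), Tl t i.succ)])
        ++ [(Sm s, (some a, b), Sm t)])
  ++ ((List.finRange G.n).flatMap fun s =>
      [(Blk s (Fin.last N), (some true, none), Blk s 0),
       (Blk s (Fin.last N), (some false, none), Tl s 0)]
      ++ ((List.finRange (N + 1)).flatMap fun j =>
          (List.finRange G.n).map fun t2 => (Tl s j, (none, none), Sm t2)))

noncomputable def emb : Q G.n N ≃ Fin (Fintype.card (Q G.n N)) := Fintype.equivFin _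

noncomputable def G' : Automaton Bool Bool :=
  ⟨Fintype.card (Q G.n N), (E' G N).map fun x => (emb G N x.1, x.2.1, emb G N x.2.2)⟩

lemma mem_edges_iff {q q' : Q G.n N} {l} :
    (emb G N q, l, emb G N q') ∈ (G' G N).edges ↔ (q, l, q') ∈ E' G N := by
  constructor
  · rintro h
    replace h := List.mem_map.mp h
    obtain ⟨⟨x1, x2, x3⟩, hx, heq⟩ := h
    simp only [Prod.mk.injEq] at heq
    obtain ⟨h1, h2, h3⟩ := heq
    rwa [(emb G N).injective h1, h2, (emb G N).injective h3] at hx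
  · intro h
    refine List.mem_map.mpr ?_
    exact ⟨(q, l, q'), h, rfl⟩

lemma memS {s t : Fin G.n} {a : Option Bool} {b : Option Bool}
    (h : (s, (a, b), t) ∈ G.edges) : (Sm s, (a, b), Sm t) ∈ E' G N := by
  unfold E'
  simp only [List.mem_append, List.mem_flatMap]
  exact Or.inl ⟨(s, (a, b), t), h, by cases a <;> simp⟩

lemma memB_eps {s t : Fin G.n} {b : Option Bool}
    (h : (s, (none, b), t) ∈ G.edges) (i : Fin (N + 1)) :
    (Blk s i, (none, b), Blk t i) ∈ E' G N := by
  unfold E'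
  simp only [List.mem_append, List.mem_flatMap]
  refine Or.inl ⟨(s, (none, b), t), h, ?_⟩
  simp only [List.mem_append, List.mem_flatMap, List.mem_finRange]
  exact Or.inl ⟨i, by simp, by simp⟩

lemma memT_eps {s t : Fin G.n} {b : Option Bool}
    (h : (s, (none, b), t) ∈ G.edges) (i : Fin (N + 1)) :
    (Tl s i, (none, b), Tl t i) ∈ E' G N := by
  unfold E'
  simp only [List.mem_append, List.mem_flatMap]
  refine Or.inl ⟨(s, (none, b), t), h, ?_⟩
  simp only [List.mem_append, List.mem_flatMap, List.mem_finRange]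
  exact Or.inl ⟨i, by simp, by simp⟩

lemma memB_cons {s t : Fin G.n} {a : Bool} {b : Option Bool}
    (h : (s, (some a, b), t) ∈ G.edges) (i : Fin N) :
    (Blk s i.castSucc, (some a, b), Blk t i.succ) ∈ E' G N := by
  unfold E'
  simp only [List.mem_append, List.mem_flatMap]
  refine Or.inl ⟨(s, (some a, b), t), h, ?_⟩
  simp only [List.mem_append, List.mem_flatMap, List.mem_finRange]
  exact Or.inl ⟨i, by simp, by simp⟩

lemma memT_cons {s t : Fin G.n} {a : Bool} {b : Option Bool}
    (h : (s, (some a, b), t) ∈ G.edges) (i : Fin N) :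
    (Tl s i.castSucc, (some a, b), Tl t i.succ) ∈ E' G N := by
  unfold E'
  simp only [List.mem_append, List.mem_flatMap]
  refine Or.inl ⟨(s, (some a, b), t), h, ?_⟩
  simp only [List.mem_append, List.mem_flatMap, List.mem_finRange]
  exact Or.inl ⟨i, by simp, by simp⟩

lemma memMkT (s : Fin G.n) :
    (Blk s (Fin.last N), (some true, none), Blk s 0) ∈ E' G N := by
  unfold E'
  simp only [List.mem_append, List.mem_flatMap, List.mem_finRange]
  exact Or.inr ⟨s, by simp, by simp⟩

lemma memMkF (s : Fin G.n) :
    (Blk s (Fin.last N), (some false, none), Tl s 0) ∈ E' G N := by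
  unfold E'
  simp only [List.mem_append, List.mem_flatMap, List.mem_finRange]
  exact Or.inr ⟨s, by simp, by simp⟩

lemma memLink (s : Fin G.n) (j : Fin (N + 1)) (t2 : Fin G.n) :
    (Tl s j, (none, none), Sm t2) ∈ E' G N := by
  unfold E'
  simp only [List.mem_append, List.mem_flatMap, List.mem_finRange, List.mem_map,
    List.mem_cons, List.mem_singleton]
  exact Or.inr ⟨s, by simp, Or.inr ⟨j, trivial, t2, trivial, rfl⟩⟩


lemma reads_single' {q q' : Q G.n N} {a : Option Bool} {b : Option Bool}
    (h : (q, (a, b), q') ∈ E' G N) :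
    (G' G N).Reads (emb G N q) (emb G N q') a.toList b.toList :=
  reads_single ((mem_edges_iff G N).mpr h)

lemma R_sim {s t : Fin G.n} {u v} (h : G.Reads s t u v) :
    (G' G N).Reads (emb G N (Sm s)) (emb G N (Sm t)) u v := by
  induction h with
  | nil s => exact Automaton.Reads.nil _
  | step he h ih =>
    exact Automaton.Reads.step ((mem_edges_iff G N).mpr (memS G N he)) ih

lemma R_tail {s t : Fin G.n} {u v} (h : G.Reads s t u v) :
    ∀ (j j' : ℕ) (h1 : j + u.length ≤ N) (h2 : j' = j + u.length),
    (G' G N).Reads (emb G N (Tl s ⟨j, by omega⟩))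
      (emb G N (Tl t ⟨j', by omega⟩)) u v := by
  induction h with
  | nil s =>
    intro j j' h1 h2
    have : j' = j := by simpa using h2
    subst this
    exact Automaton.Reads.nil _
  | @step s t r a b u v he hr ih =>
    intro j j' h1 h2
    cases a with
    | none =>
      simp only [Option.toList, List.nil_append] at h1 h2 ⊢
      exact Automaton.Reads.step ((mem_edges_iff G N).mpr (memT_eps G N he ⟨j, by omega⟩))
        (ih j j' h1 h2)
    | some bit =>
      have hL : ((some bit : Option Bool).toList ++ u).length = u.length + 1 := by simp
      have hjN : j < N := by omega
      exact Automaton.Reads.step ((mem_edges_iff G N).mpr (memT_cons G N he ⟨j, hjN⟩))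
        (ih (j + 1) j' (by omega) (by omega))

lemma R_blk {s t : Fin G.n} {u v} (h : G.Reads s t u v) :
    ∀ (j j' : ℕ) (h1 : j + u.length ≤ N) (h2 : j' = j + u.length),
    (G' G N).Reads (emb G N (Blk s ⟨j, by omega⟩))
      (emb G N (Blk t ⟨j', by omega⟩)) u v := by
  induction h with
  | nil s =>
    intro j j' h1 h2
    have : j' = j := by simpa using h2
    subst this
    exact Automaton.Reads.nil _
  | @step s t r a b u v he hr ih =>
    intro j j' h1 h2
    cases a with
    | none =>
      simp only [Option.toList, List.nil_append] at h1 h2 ⊢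
      exact Automaton.Reads.step ((mem_edges_iff G N).mpr (memB_eps G N he ⟨j, by omega⟩))
        (ih j j' h1 h2)
    | some bit =>
      have hL : ((some bit : Option Bool).toList ++ u).length = u.length + 1 := by simp
      have hjN : j < N := by omega
      exact Automaton.Reads.step ((mem_edges_iff G N).mpr (memB_cons G N he ⟨j, hjN⟩))
        (ih (j + 1) j' (by omega) (by omega))

/-- Insert a marker bit after each of the first `k` blocks of `N` bits. -/
def wrap (N : ℕ) : ℕ → List Bool → List Bool
  | 0, u => u
  | (k + 1), u => u.take N ++ decide (0 < k) :: wrap N k (u.drop N)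

lemma wrap_length (N : ℕ) : ∀ (k : ℕ) (u : List Bool), N * k ≤ u.length →
    (wrap N k u).length = u.length + k := by
  intro k
  induction k with
  | zero => intro u _; simp [wrap]
  | succ k ih =>
    intro u h
    rw [Nat.mul_succ] at h
    have hN : N ≤ u.length := by omega
    have := ih (u.drop N) (by rw [List.length_drop]; omega)
    simp only [wrap, List.length_append, List.length_cons, this, List.length_take,
      List.length_drop]
    omega

lemma build0 {s t s2 t2 : Fin G.n} {u x p2 y}
    (h : G.Reads s t u x) (hu : u.length ≤ N) (h3 : G.Reads s2 t2 p2 y) :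
    (G' G N).Reads (emb G N (Tl s ⟨0, by omega⟩)) (emb G N (Sm t2)) (u ++ p2) (x ++ y) := by
  have h1 := R_tail G N h 0 u.length (by omega) (by omega)
  have h2 := reads_single' G N (memLink G N t ⟨u.length, by omega⟩ s2)
  have h4 := R_sim G N h3
  have := reads_trans h1 (reads_trans h2 h4)
  simpa using this

lemma buildS : ∀ (k : ℕ) {u x : List Bool} {s t s2 t2 : Fin G.n} {p2 y},
    G.Reads s t u x → N * (k + 1) ≤ u.length → u.length ≤ N * (k + 1) + N →
    G.Reads s2 t2 p2 y →
    (G' G N).Reads (emb G N (Blk s ⟨0, by omega⟩)) (emb G N (Sm t2))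
      (wrap N (k + 1) u ++ p2) (x ++ y) := by
  intro k
  induction k with
  | zero =>
    intro u x s t s2 t2 p2 y h hlow hhigh h3
    rw [Nat.mul_succ, Nat.mul_zero, Nat.zero_add] at hlow hhigh
    obtain ⟨m, x₁, x₂, hx, hr1, hr2⟩ := reads_split h (u.take N) (u.drop N)
      (List.take_append_drop N u).symm
    have htk : (u.take N).length = N := by rw [List.length_take]; omega
    have hb := R_blk G N hr1 0 N (by omega) (by omega)
    have hmk := reads_single' G N (memMkF G N m)
    have hdrop : (u.drop N).length ≤ N := by rw [List.length_drop]; omega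
    have htail := build0 G N hr2 hdrop h3
    have hcomp := reads_trans hb (reads_trans hmk htail)
    rw [hx] at *
    simp only [wrap]
    simpa [List.append_assoc] using hcomp
  | succ k ih =>
    intro u x s t s2 t2 p2 y h hlow hhigh h3
    rw [Nat.mul_succ] at hlow hhigh
    have hN : N ≤ u.length := by
      have : N ≤ N * (k + 1) := Nat.le_mul_of_pos_right N (by omega)
      omega
    obtain ⟨m, x₁, x₂, hx, hr1, hr2⟩ := reads_split h (u.take N) (u.drop N)
      (List.take_append_drop N u).symm
    have htk : (u.take N).length = N := by rw [List.length_take]; omega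
    have hb := R_blk G N hr1 0 N (by omega) (by omega)
    have hmk := reads_single' G N (memMkT G N m)
    have hrest := ih hr2 (by rw [List.length_drop]; omega) (by rw [List.length_drop]; omega) h3
    have hcomp := reads_trans hb (reads_trans hmk hrest)
    rw [hx] at *
    rw [show wrap N (k + 1 + 1) u = u.take N ++ true :: wrap N (k + 1) (u.drop N) from by
      rw [wrap]; simp]
    simpa [List.append_assoc] using hcomp


/-- Deterministic parse of the block phase: strips markers, returns the stripped
data and (if the end marker was seen) the remaining string. -/
def parseB : ℕ → List Bool → List Bool × Option (List Bool)
  | _, [] => ([], none)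
  | i, bit :: rest =>
    if i < N then
      ((bit :: (parseB (i + 1) rest).1), (parseB (i + 1) rest).2)
    else if bit then parseB 0 rest else ([], some rest)

lemma parseB_nil (i : ℕ) : parseB N i [] = ([], none) := by rw [parseB]

lemma parseB_lt {i : ℕ} (h : i < N) (bit : Bool) (rest : List Bool) :
    parseB N i (bit :: rest) = (bit :: (parseB N (i + 1) rest).1, (parseB N (i + 1) rest).2) := by
  rw [parseB]; simp [h]

lemma parseB_ge_true {i : ℕ} (h : ¬ i < N) (rest : List Bool) :
    parseB N i (true :: rest) = parseB N 0 rest := by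
  rw [parseB]; simp [h]

lemma parseB_ge_false {i : ℕ} (h : ¬ i < N) (rest : List Bool) :
    parseB N i (false :: rest) = ([], some rest) := by
  rw [parseB]; simp [h]

def TailOk (s : Fin G.n) (j : ℕ) (u z : List Bool) : Prop :=
  (∃ t, G.Reads s t u z) ∨
  (∃ p1 p2 x y t, u = p1 ++ p2 ∧ z = x ++ y ∧ j + p1.length ≤ N ∧
    G.Reads s t p1 x ∧ G.Rel p2 y)

def BlkOk (s : Fin G.n) (i : ℕ) (u z : List Bool) : Prop :=
  ((parseB N i u).2 = none → ∃ t, G.Reads s t (parseB N i u).1 z) ∧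
  (∀ rest, (parseB N i u).2 = some rest →
    ∃ x z₂ t, z = x ++ z₂ ∧ G.Reads s t (parseB N i u).1 x ∧ TailOk G N t 0 rest z₂)

def Ok : Q G.n N → List Bool → List Bool → Prop
  | Sum.inl (s, i), u, z => BlkOk G N s i u z
  | Sum.inr (Sum.inl (s, j)), u, z => TailOk G N s j u z
  | Sum.inr (Sum.inr s), u, z => ∃ t, G.Reads s t u z

variable {G N}

lemma tailOk_eps {s t : Fin G.n} {b : Option Bool} {j : ℕ} {u z}
    (he : (s, (none, b), t) ∈ G.edges) (h : TailOk G N t j u z) :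
    TailOk G N s j u (b.toList ++ z) := by
  rcases h with ⟨t', hr⟩ | ⟨p1, p2, x, y, t', h1, h2, h3, h4, h5⟩
  · exact Or.inl ⟨t', by simpa using Automaton.Reads.step he hr⟩
  · exact Or.inr ⟨p1, p2, b.toList ++ x, y, t', h1, by rw [h2, List.append_assoc], h3,
      by simpa using Automaton.Reads.step he h4, h5⟩

lemma tailOk_cons {s t : Fin G.n} {bit : Bool} {b : Option Bool} {j : ℕ} {u z}
    (he : (s, (some bit, b), t) ∈ G.edges) (h : TailOk G N t (j + 1) u z) :
    TailOk G N s j (bit :: u) (b.toList ++ z) := by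
  rcases h with ⟨t', hr⟩ | ⟨p1, p2, x, y, t', h1, h2, h3, h4, h5⟩
  · exact Or.inl ⟨t', by simpa using Automaton.Reads.step he hr⟩
  · refine Or.inr ⟨bit :: p1, p2, b.toList ++ x, y, t', by simp [h1],
      by rw [h2, List.append_assoc], by simp only [List.length_cons]; omega,
      by simpa using Automaton.Reads.step he h4, h5⟩

lemma tailOk_link {s t2 : Fin G.n} {j : ℕ} {u z} (hj : j ≤ N)
    (h : ∃ t', G.Reads t2 t' u z) : TailOk G N s j u z := by
  obtain ⟨t', hr⟩ := h
  exact Or.inr ⟨[], u, [], z, s, rfl, rfl, by simpa using hj, Automaton.Reads.nil s,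
    ⟨t2, t', hr⟩⟩

lemma blkOk_eps {s t : Fin G.n} {b : Option Bool} {i : ℕ} {u z}
    (he : (s, (none, b), t) ∈ G.edges) (h : BlkOk G N t i u z) :
    BlkOk G N s i u (b.toList ++ z) := by
  constructor
  · intro h0
    obtain ⟨t', hr⟩ := h.1 h0
    exact ⟨t', by simpa using Automaton.Reads.step he hr⟩
  · intro rest h0
    obtain ⟨x, z₂, t', hz, hr, ht⟩ := h.2 rest h0
    exact ⟨b.toList ++ x, z₂, t', by rw [hz, List.append_assoc],
      by simpa using Automaton.Reads.step he hr, ht⟩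

lemma blkOk_cons {s t : Fin G.n} {bit : Bool} {b : Option Bool} {i : ℕ} {u z}
    (he : (s, (some bit, b), t) ∈ G.edges) (hi : i < N) (h : BlkOk G N t (i + 1) u z) :
    BlkOk G N s i (bit :: u) (b.toList ++ z) := by
  have hp := parseB_lt N hi bit u
  constructor
  · intro h0
    rw [hp] at h0 ⊢
    obtain ⟨t', hr⟩ := h.1 h0
    exact ⟨t', by simpa using Automaton.Reads.step he hr⟩
  · intro rest h0
    rw [hp] at h0 ⊢
    obtain ⟨x, z₂, t', hz, hr, ht⟩ := h.2 rest h0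
    exact ⟨b.toList ++ x, z₂, t', by rw [hz, List.append_assoc],
      by simpa using Automaton.Reads.step he hr, ht⟩

lemma blkOk_mkT {s : Fin G.n} {i : ℕ} {u z} (hi : ¬ i < N) (h : BlkOk G N s 0 u z) :
    BlkOk G N s i (true :: u) z := by
  have hp := parseB_ge_true N hi u
  constructor
  · intro h0; rw [hp] at h0 ⊢; exact h.1 h0
  · intro rest h0; rw [hp] at h0 ⊢; exact h.2 rest h0

lemma blkOk_mkF {s : Fin G.n} {i : ℕ} {u z} (hi : ¬ i < N) (h : TailOk G N s 0 u z) :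
    BlkOk G N s i (false :: u) z := by
  have hp := parseB_ge_false N hi u
  constructor
  · intro h0; rw [hp] at h0; simp at h0
  · intro rest h0
    rw [hp] at h0 ⊢
    obtain rfl : u = rest := by injection h0
    exact ⟨[], z, s, rfl, Automaton.Reads.nil s, h⟩

variable (G N)

lemma ok_nil : ∀ q : Q G.n N, Ok G N q [] [] := by
  rintro (⟨s, i⟩ | ⟨s, j⟩ | s)
  · constructor
    · intro _
      rw [parseB_nil]
      exact ⟨s, Automaton.Reads.nil s⟩
    · intro rest h0
      rw [parseB_nil] at h0
      simp at h0
  · exact Or.inl ⟨s, Automaton.Reads.nil s⟩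
  · exact ⟨s, Automaton.Reads.nil s⟩

lemma sound {q0 r0 : Fin (G' G N).n} {u z} (h : (G' G N).Reads q0 r0 u z) :
    Ok G N ((emb G N).symm q0) u z := by
  induction h with
  | nil s => exact ok_nil G N _
  | @step s' t' r' a b u' z' he hr ih =>
    replace he := List.mem_map.mp he
    obtain ⟨⟨q, l, q'⟩, hq, heq⟩ := he
    replace heq : emb G N q = s' ∧ l = (a, b) ∧ emb G N q' = t' :=
      ⟨congrArg (fun x : Fin (G' G N).n × (Option Bool × Option Bool) × Fin (G' G N).n => x.1) heq,
        congrArg (fun x : Fin (G' G N).n × (Option Bool × Option Bool) × Fin (G' G N).n => x.2.1) heq,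
        congrArg (fun x : Fin (G' G N).n × (Option Bool × Option Bool) × Fin (G' G N).n => x.2.2) heq⟩
    obtain ⟨h1, h2, h3⟩ := heq
    subst h2
    rw [← h1, Equiv.symm_apply_apply]
    rw [← h3, Equiv.symm_apply_apply] at ih
    clear h1 h3 hr
    unfold E' at hq
    rw [List.mem_append] at hq
    rcases hq with hq | hq
    · rw [List.mem_flatMap] at hq
      obtain ⟨⟨es, ⟨ea, eb⟩, et⟩, hed, hmem⟩ := hq
      cases ea with
      | none =>
        simp only [List.mem_append, List.mem_flatMap, List.mem_cons, List.mem_finRange,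
          List.not_mem_nil, or_false, true_and, List.mem_singleton, Prod.mk.injEq] at hmem
        rcases hmem with ⟨i, ⟨hq1, ⟨ha, hb⟩, hq2⟩ | ⟨hq1, ⟨ha, hb⟩, hq2⟩⟩ |
          ⟨hq1, ⟨ha, hb⟩, hq2⟩
        · subst hq1; subst hq2; subst ha; subst hb
          simpa [Ok] using blkOk_eps hed ih
        · subst hq1; subst hq2; subst ha; subst hb
          simpa [Ok] using tailOk_eps hed ih
        · subst hq1; subst hq2; subst ha; subst hb
          obtain ⟨t', hr'⟩ := ih
          exact ⟨t', Automaton.Reads.step hed hr'⟩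
      | some bit =>
        simp only [List.mem_append, List.mem_flatMap, List.mem_cons, List.mem_finRange,
          List.not_mem_nil, or_false, true_and, List.mem_singleton, Prod.mk.injEq] at hmem
        rcases hmem with ⟨i, ⟨hq1, ⟨ha, hb⟩, hq2⟩ | ⟨hq1, ⟨ha, hb⟩, hq2⟩⟩ |
          ⟨hq1, ⟨ha, hb⟩, hq2⟩
        · subst hq1; subst hq2; subst ha; subst hb
          have : BlkOk G N et (↑(i.castSucc) + 1) u' z' := by
            simpa [Ok, Fin.coe_castSucc, Fin.val_succ] using ih
          simpa [Ok] using blkOk_cons hed (by simpa using i.isLt) this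
        · subst hq1; subst hq2; subst ha; subst hb
          have : TailOk G N et (↑(i.castSucc) + 1) u' z' := by
            simpa [Ok, Fin.coe_castSucc, Fin.val_succ] using ih
          simpa [Ok] using tailOk_cons hed this
        · subst hq1; subst hq2; subst ha; subst hb
          obtain ⟨t', hr'⟩ := ih
          exact ⟨t', Automaton.Reads.step hed hr'⟩
    · rw [List.mem_flatMap] at hq
      obtain ⟨es, hes, hmem⟩ := hq
      simp only [List.mem_append, List.mem_flatMap, List.mem_cons, List.mem_finRange,
        List.not_mem_nil, or_false, true_and, List.mem_map, List.mem_singleton,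
        Prod.mk.injEq] at hmem
      rcases hmem with (⟨hq1, ⟨ha, hb⟩, hq2⟩ | ⟨hq1, ⟨ha, hb⟩, hq2⟩) |
        ⟨j, t2, hq1, ⟨ha, hb⟩, hq2⟩
      · subst hq1; subst hq2; subst ha; subst hb
        simpa [Ok] using blkOk_mkT (by simp) ih
      · subst hq1; subst hq2; subst ha; subst hb
        simpa [Ok] using blkOk_mkF (by simp) ih
      · subst hq1; subst hq2; subst ha; subst hb
        simpa [Ok] using tailOk_link (by omega) ih


/-- Strings readable from `p` in the original automaton. -/
def AA (p : List Bool) : Set (List Bool) := {z | G.Rel p z}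

variable (p : List Bool)

def SSet : ℕ → Set (List Bool)
  | 0 => Set.image2 (· ++ ·) (AA G (p.take 0)) (AA G (p.drop 0))
  | (ℓ + 1) => SSet ℓ ∪ Set.image2 (· ++ ·) (AA G (p.take (ℓ + 1))) (AA G (p.drop (ℓ + 1)))

def gSet (i : ℕ) : Set (List Bool) :=
  ((parseB N i p).2).elim (AA G (parseB N i p).1)
    (fun rest => Set.image2 (· ++ ·) (AA G (parseB N i p).1) (AA G rest ∪ SSet G rest N))

def CSet : ℕ → Set (List Bool)
  | 0 => gSet G N p 0
  | (i + 1) => CSet i ∪ gSet G N p (i + 1)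

def ZZ : Set (List Bool) := (AA G p ∪ SSet G p N) ∪ CSet G N p N

variable {G N p}

lemma mem_SSet : ∀ (m ℓ : ℕ), ℓ ≤ m → ∀ {x y : List Bool},
    x ∈ AA G (p.take ℓ) → y ∈ AA G (p.drop ℓ) → x ++ y ∈ SSet G p m := by
  intro m
  induction m with
  | zero =>
    intro ℓ hℓ x y hx hy
    interval_cases ℓ
    exact Set.mem_image2_of_mem hx hy
  | succ m ih =>
    intro ℓ hℓ x y hx hy
    rcases Nat.lt_or_ge ℓ (m + 1) with h | h
    · exact Or.inl (ih ℓ (by omega) hx hy)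
    · have : ℓ = m + 1 := by omega
      subst this
      exact Or.inr (Set.mem_image2_of_mem hx hy)

lemma mem_CSet : ∀ (m i : ℕ), i ≤ m → ∀ {z : List Bool},
    z ∈ gSet G N p i → z ∈ CSet G N p m := by
  intro m
  induction m with
  | zero =>
    intro i hi z hz
    interval_cases i
    exact hz
  | succ m ih =>
    intro i hi z hz
    rcases Nat.lt_or_ge i (m + 1) with h | h
    · exact Or.inl (ih i (by omega) hz)
    · have : i = m + 1 := by omega
      subst this
      exact Or.inr hz

lemma tailOk_mem {s : Fin G.n} {j : ℕ} {u z} (h : TailOk G N s j u z) :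
    z ∈ AA G u ∪ SSet G u N := by
  rcases h with ⟨t, hr⟩ | ⟨p1, p2, x, y, t, h1, h2, h3, h4, h5⟩
  · exact Or.inl ⟨s, t, hr⟩
  · subst h1; subst h2
    refine Or.inr (mem_SSet N p1.length (by omega) ?_ ?_)
    · rw [List.take_left]
      exact ⟨s, t, h4⟩
    · rw [List.drop_left]
      exact h5

lemma blkOk_mem {s : Fin G.n} {i : ℕ} {u z} (hi : i ≤ N) (h : BlkOk G N s i u z) :
    z ∈ CSet G N u N := by
  refine mem_CSet N i hi ?_
  rcases ho : (parseB N i u).2 with _ | rest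
  · obtain ⟨t, hr⟩ := h.1 ho
    unfold gSet
    rw [ho]
    exact ⟨s, t, hr⟩
  · obtain ⟨x, z₂, t, hz, hr, ht⟩ := h.2 rest ho
    unfold gSet
    rw [ho]
    exact ⟨x, ⟨s, t, hr⟩, z₂, tailOk_mem ht, hz.symm⟩

lemma rel_sub : {z | (G' G N).Rel p z} ⊆ ZZ G N p := by
  rintro z ⟨q0, r0, h⟩
  have hOk := sound G N h
  rcases hq : (emb G N).symm q0 with (⟨s, i⟩ | ⟨s, j⟩ | s) <;> rw [hq] at hOk
  · exact Or.inr (blkOk_mem (by omega) hOk)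
  · exact Or.inl (tailOk_mem hOk)
  · obtain ⟨t, hr⟩ := hOk
    exact Or.inl (Or.inl ⟨s, t, hr⟩)

section Card

variable {c : ℕ} (hfin : ∀ q, (AA G q).Finite) (hcard : ∀ q, (AA G q).ncard ≤ c)
include hfin hcard

lemma SSet_fin : ∀ m, (SSet G p m).Finite := by
  intro m
  induction m with
  | zero => exact (hfin _).image2 _ (hfin _)
  | succ m ih => exact ih.union ((hfin _).image2 _ (hfin _))

lemma SSet_card : ∀ m, (SSet G p m).ncard ≤ (m + 1) * (c * c) := by
  intro m
  induction m with
  | zero =>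
    simpa [SSet] using le_trans (ncard_image2_le _ (hfin _) (hfin _))
      (Nat.mul_le_mul (hcard _) (hcard _))
  | succ m ih =>
    refine le_trans (Set.ncard_union_le _ _) ?_
    have h2 := le_trans (ncard_image2_le (· ++ ·) (hfin (p.take (m + 1))) (hfin (p.drop (m + 1))))
      (Nat.mul_le_mul (hcard _) (hcard _))
    calc (SSet G p m).ncard + _ ≤ (m + 1) * (c * c) + (c * c) := Nat.add_le_add ih h2
    _ = (m + 1 + 1) * (c * c) := by ring

lemma gSet_fin : ∀ i, (gSet G N p i).Finite := by
  intro i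
  unfold gSet
  rcases (parseB N i p).2 with _ | rest
  · exact hfin _
  · exact (hfin _).image2 _ (((hfin _).union (SSet_fin hfin hcard N)))

lemma gSet_card : ∀ i, (gSet G N p i).ncard ≤ c * (c + (N + 1) * (c * c)) + c := by
  intro i
  unfold gSet
  rcases (parseB N i p).2 with _ | rest
  · exact le_trans (hcard _) (by omega)
  · refine le_trans (le_trans (ncard_image2_le _ (hfin _)
      ((hfin _).union (SSet_fin hfin hcard N))) ?_) (Nat.le_add_right _ _)
    refine Nat.mul_le_mul (hcard _) ?_
    refine le_trans (Set.ncard_union_le _ _) (Nat.add_le_add (hcard _) (SSet_card hfin hcard N))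

lemma CSet_fin : ∀ m, (CSet G N p m).Finite := by
  intro m
  induction m with
  | zero => exact gSet_fin hfin hcard 0
  | succ m ih => exact ih.union (gSet_fin hfin hcard _)

lemma CSet_card : ∀ m, (CSet G N p m).ncard ≤ (m + 1) * (c * (c + (N + 1) * (c * c)) + c) := by
  intro m
  induction m with
  | zero => simpa [CSet] using gSet_card hfin hcard 0
  | succ m ih =>
    refine le_trans (Set.ncard_union_le _ _) ?_
    calc (CSet G N p m).ncard + _
        ≤ (m + 1) * (c * (c + (N + 1) * (c * c)) + c) + (c * (c + (N + 1) * (c * c)) + c) :=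
          Nat.add_le_add ih (gSet_card hfin hcard _)
      _ = (m + 1 + 1) * (c * (c + (N + 1) * (c * c)) + c) := by ring

lemma ZZ_fin : (ZZ G N p).Finite :=
  (((hfin p).union (SSet_fin hfin hcard N)).union (CSet_fin hfin hcard N))

lemma ZZ_card : (ZZ G N p).ncard ≤
    (c + (N + 1) * (c * c)) + (N + 1) * (c * (c + (N + 1) * (c * c)) + c) := by
  refine le_trans (Set.ncard_union_le _ _) (Nat.add_le_add ?_ (CSet_card hfin hcard N))
  exact le_trans (Set.ncard_union_le _ _) (Nat.add_le_add (hcard p) (SSet_card hfin hcard N))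

end Card

end Construction

lemma autK_le {R : List Bool → List Bool → Prop} {x p : List Bool} (h : R p x) :
    autK R x ≤ p.length :=
  sInf_le ⟨p, h, rfl⟩

lemma autK_top {R : List Bool → List Bool → Prop} {x : List Bool} (h : ¬ ∃ p, R p x) :
    autK R x = ⊤ := by
  rw [autK]
  rw [show {n : ℕ∞ | ∃ p : List Bool, R p x ∧ n = p.length} = ∅ from ?_]
  · exact sInf_empty
  rw [Set.eq_empty_iff_forall_notMem]
  rintro n ⟨p, hp, _⟩
  exact h ⟨p, hp⟩

lemma autK_attained {R : List Bool → List Bool → Prop} {x : List Bool} (h : ∃ p, R p x) :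
    ∃ p, R p x ∧ autK R x = p.length := by
  have hS : {k : ℕ | ∃ p, R p x ∧ p.length = k}.Nonempty := by
    obtain ⟨p, hp⟩ := h
    exact ⟨p.length, p, hp, rfl⟩
  obtain ⟨p, hp, hlen⟩ := Nat.sInf_mem hS
  refine ⟨p, hp, le_antisymm (autK_le hp) ?_⟩
  apply le_sInf
  rintro b ⟨q, hq, rfl⟩
  have h2 : sInf {k : ℕ | ∃ p, R p x ∧ p.length = k} ≤ q.length :=
    Nat.sInf_le ⟨q, hq, rfl⟩
  rw [← hlen] at h2
  exact_mod_cast h2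

end AutoKC

open AutoKC in
/-- For every mode `R` and `ε > 0` there is a mode `R'` with
`K_{R'}(xy) ≤ (1+ε)·K_R(x) + K_R(y)` for all `x, y`. -/
theorem autK_concat_almost_additive (R : List Bool → List Bool → Prop)
    (hR : IsDescriptionMode R) (ε : ℝ≥0∞) (hε : 0 < ε) :
    ∃ R' : List Bool → List Bool → Prop, IsDescriptionMode R' ∧
      ∀ x y : List Bool,
        (autK R' (x ++ y) : ℝ≥0∞) ≤ (1 + ε) * (autK R x : ℝ≥0∞) + (autK R y : ℝ≥0∞) := by
  classical
  obtain ⟨⟨G, hiff⟩, c, hc⟩ := hR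
  obtain ⟨N, hN0, hNε⟩ : ∃ N : ℕ, 0 < N ∧ ((N : ℝ≥0∞))⁻¹ ≤ ε := by
    obtain ⟨N, hN⟩ := ENNReal.exists_inv_nat_lt hε.ne'
    refine ⟨N, ?_, hN.le⟩
    rcases Nat.eq_zero_or_pos N with h | h
    · subst h; simp at hN
    · exact h
  have hfin : ∀ q, (AA G q).Finite := by
    intro q
    have he : AA G q = {x | R q x} := Set.ext fun z => (hiff q z).symm
    rw [he]; exact (hc q).1
  have hcard : ∀ q, (AA G q).ncard ≤ c := by
    intro q
    have he : AA G q = {x | R q x} := Set.ext fun z => (hiff q z).symm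
    rw [he]; exact (hc q).2
  refine ⟨(G' G N).Rel, ⟨⟨G' G N, fun u v => Iff.rfl⟩, ?_⟩, ?_⟩
  · refine ⟨(c + (N + 1) * (c * c)) + (N + 1) * (c * (c + (N + 1) * (c * c)) + c),
      fun p => ?_⟩
    have hsub : {z | (G' G N).Rel p z} ⊆ ZZ G N p := rel_sub
    exact ⟨(ZZ_fin hfin hcard).subset hsub,
      le_trans (Set.ncard_le_ncard hsub (ZZ_fin hfin hcard)) (ZZ_card hfin hcard)⟩
  · intro x y
    by_cases hx : ∃ p, R p x
    swap
    · rw [autK_top hx]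
      have ht : (((⊤ : ℕ∞)) : ℝ≥0∞) = ⊤ := by simp
      rw [ht, ENNReal.mul_top (by simp), top_add]
      exact le_top
    by_cases hy : ∃ p, R p y
    swap
    · rw [autK_top hy]
      have ht : (((⊤ : ℕ∞)) : ℝ≥0∞) = ⊤ := by simp
      rw [ht, add_top]
      exact le_top
    obtain ⟨p1, hp1, hK1⟩ := autK_attained hx
    obtain ⟨p2, hp2, hK2⟩ := autK_attained hy
    obtain ⟨s, t, h1⟩ := (hiff p1 x).mp hp1
    obtain ⟨s2, t2, h2⟩ := (hiff p2 y).mp hp2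
    set L := p1.length with hL
    obtain ⟨k, hkdiv, hNk, hRel⟩ :
        ∃ k, k ≤ L / N ∧ N * k ≤ L ∧ (G' G N).Rel (wrap N k p1 ++ p2) (x ++ y) := by
      by_cases hsh : L ≤ N
      · refine ⟨0, Nat.zero_le _, by simp, emb G N (Tl s ⟨0, by omega⟩), emb G N (Sm t2), ?_⟩
        show (G' G N).Reads _ _ (wrap N 0 p1 ++ p2) (x ++ y)
        rw [show wrap N 0 p1 = p1 from rfl]
        exact build0 G N h1 hsh h2
      · have hdm := Nat.div_add_mod L N
        have hmod : L % N < N := Nat.mod_lt _ hN0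
        have hkpos : 1 ≤ L / N := (Nat.one_le_div_iff hN0).mpr (by omega)
        obtain ⟨k', hk'⟩ : ∃ k', L / N = k' + 1 := ⟨L / N - 1, by omega⟩
        have hdm2 := hdm
        rw [hk'] at hdm2
        refine ⟨L / N, le_rfl, by omega, emb G N (Blk s ⟨0, by omega⟩), emb G N (Sm t2), ?_⟩
        show (G' G N).Reads _ _ (wrap N (L / N) p1 ++ p2) (x ++ y)
        rw [hk']
        exact buildS G N k' h1 (by omega) (by omega) h2
    have hlen : (wrap N k p1 ++ p2).length = L + k + p2.length := by
      rw [List.length_append, wrap_length N k p1 hNk]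
    have hle1 : autK (G' G N).Rel (x ++ y) ≤ ((L + k + p2.length : ℕ) : ℕ∞) := by
      have := autK_le hRel
      rwa [hlen] at this
    have hle2 : (autK (G' G N).Rel (x ++ y) : ℝ≥0∞) ≤ ((L + k + p2.length : ℕ) : ℝ≥0∞) := by
      exact_mod_cast hle1
    rw [hK1, hK2]
    have hcast1 : ((((L : ℕ) : ℕ∞)) : ℝ≥0∞) = (L : ℝ≥0∞) := by push_cast; ring
    have hcast2 : ((((p2.length : ℕ) : ℕ∞)) : ℝ≥0∞) = (p2.length : ℝ≥0∞) := by
      push_cast; ring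
    rw [hcast1, hcast2]
    have hNne : ((N : ℝ≥0∞)) ≠ 0 := by
      simp only [ne_eq, Nat.cast_eq_zero]; omega
    have hk : (k : ℝ≥0∞) ≤ ε * (L : ℝ≥0∞) := by
      calc (k : ℝ≥0∞) ≤ ((L / N : ℕ) : ℝ≥0∞) := by exact_mod_cast hkdiv
        _ ≤ (L : ℝ≥0∞) / (N : ℝ≥0∞) := by
            rw [ENNReal.le_div_iff_mul_le (Or.inl hNne) (Or.inl (ENNReal.natCast_ne_top N))]
            exact_mod_cast Nat.div_mul_le_self L N
        _ = (L : ℝ≥0∞) * (N : ℝ≥0∞)⁻¹ := by rw [div_eq_mul_inv]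
        _ ≤ (L : ℝ≥0∞) * ε := mul_le_mul_right hNε _
        _ = ε * (L : ℝ≥0∞) := mul_comm _ _
    refine le_trans hle2 ?_
    have hpush : ((L + k + p2.length : ℕ) : ℝ≥0∞) = (L : ℝ≥0∞) + (k : ℝ≥0∞) + (p2.length : ℝ≥0∞) := by
      push_cast; ring
    rw [hpush, one_add_mul]
    exact add_le_add (add_le_add le_rfl hk) le_rfl
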